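/- For all complex numbers $w_1$ and $w_2$, $\left|\frac{e^{w_1}-e^{w_2}}{w_1-w_2}\right|^2 \le \frac{(e^{2\,\mathrm{Re}\,w_1}-1)(e^{2\,\mathrm{Re}\,w_2}-1)}{(2\,\mathrm{Re}\,w_1)(2\,\mathrm{Re}\,w_2)}$, where each fraction is interpreted as its limiting value when the denominator is zero. -/

import Mathlib

open MeasureTheory intervalIntegral

/-- The integral `∫ t in 0..1, exp (2 x t)` equals the "limiting" fraction. -/
lemma aux_exp_integral (x : ℝ) :
    (∫ t in (0:ℝ)..1, Real.exp (2 * x * t)) =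
      (if x = 0 then 1 else (Real.exp (2 * x) - 1) / (2 * x)) := by
  split_ifs with h
  · simp [h]
  · have h2 : (2 * x) ≠ 0 := mul_ne_zero two_ne_zero h
    have e : ∀ t : ℝ, 2 * x * t = t * (2 * x) := fun t => by ring
    simp_rw [e]
    rw [intervalIntegral.integral_comp_mul_right Real.exp h2]
    simp only [smul_eq_mul, zero_mul, one_mul, Real.exp_zero]
    field_simp
    simp [integral_exp]

lemma aux_nonneg (x : ℝ) :
    (0:ℝ) ≤ (if x = 0 then 1 else (Real.exp (2 * x) - 1) / (2 * x)) := by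
  rw [← aux_exp_integral]
  exact intervalIntegral.integral_nonneg zero_le_one fun t _ => (Real.exp_pos _).le

theorem stmt0 (w₁ w₂ : ℂ) :
    ‖(if w₁ = w₂ then Complex.exp w₁
        else (Complex.exp w₁ - Complex.exp w₂) / (w₁ - w₂))‖ ^ 2 ≤
      (if w₁.re = 0 then 1 else (Real.exp (2 * w₁.re) - 1) / (2 * w₁.re)) *
      (if w₂.re = 0 then 1 else (Real.exp (2 * w₂.re) - 1) / (2 * w₂.re)) := by
  set x₁ := w₁.re with hx₁
  set x₂ := w₂.re with hx₂
  -- Step 1: the quotient is an integral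
  have hQ : (if w₁ = w₂ then Complex.exp w₁ else (Complex.exp w₁ - Complex.exp w₂) / (w₁ - w₂))
      = ∫ t in (0:ℝ)..1, Complex.exp ((w₁ - w₂) * t + w₂) := by
    split_ifs with h
    · subst h; simp
    · have hc : w₁ - w₂ ≠ 0 := sub_ne_zero.mpr h
      have e : ∀ t : ℝ, Complex.exp ((w₁ - w₂) * t + w₂)
          = Complex.exp ((w₁ - w₂) * t) * Complex.exp w₂ := fun t => by rw [Complex.exp_add]
      simp_rw [e]
      rw [intervalIntegral.integral_mul_const, integral_exp_mul_complex hc]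
      push_cast
      rw [mul_one, mul_zero, Complex.exp_zero, div_mul_eq_mul_div, sub_mul, one_mul,
        ← Complex.exp_add, sub_add_cancel]
  -- Step 2: bound the absolute value by the integral of absolute values
  have habs : ‖(if w₁ = w₂ then Complex.exp w₁
      else (Complex.exp w₁ - Complex.exp w₂) / (w₁ - w₂))‖
      ≤ ∫ t in (0:ℝ)..1, Real.exp (x₁ * t) * Real.exp (x₂ * (1 - t)) := by
    rw [hQ]
    refine (intervalIntegral.norm_integral_le_integral_norm zero_le_one).trans_eq ?_
    refine intervalIntegral.integral_congr fun t _ => ?_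
    rw [Complex.norm_exp, ← Real.exp_add]
    congr 1
    simp [Complex.add_re, Complex.mul_re, Complex.sub_re, ← hx₁, ← hx₂]
    ring
  -- Step 3: Cauchy-Schwarz
  set μ := volume.restrict (Set.Ioc (0:ℝ) 1) with hμ
  have hpq : Real.HolderConjugate 2 2 := Real.HolderConjugate.two_two
  have hmem : ∀ a b : ℝ, MemLp (fun t => Real.exp (a * t + b)) (ENNReal.ofReal 2) μ := by
    intro a b
    refine MemLp.of_bound ((Real.continuous_exp.comp
      ((continuous_const.mul continuous_id).add continuous_const)).aestronglyMeasurable)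
      (Real.exp (|a| + |b|)) ?_
    filter_upwards [ae_restrict_mem measurableSet_Ioc] with t ht
    rw [Real.norm_of_nonneg (Real.exp_pos _).le]
    apply Real.exp_le_exp.mpr
    have h1 : a * t ≤ |a| := by
      calc a * t ≤ |a * t| := le_abs_self _
        _ = |a| * |t| := abs_mul _ _
        _ ≤ |a| * 1 := by
            have : |t| ≤ 1 := by rw [abs_of_nonneg ht.1.le]; exact ht.2
            exact mul_le_mul_of_nonneg_left this (abs_nonneg _)
        _ = |a| := mul_one _
    linarith [le_abs_self b]
  have hf := hmem x₁ 0
  have hg := hmem (-x₂) x₂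
  simp only [add_zero] at hf
  have hg' : MemLp (fun t => Real.exp (x₂ * (1 - t))) (ENNReal.ofReal 2) μ := by
    convert hg using 2 with t
    ring_nf
  have hCS := MeasureTheory.integral_mul_le_Lp_mul_Lq_of_nonneg hpq
    (Filter.Eventually.of_forall fun t => (Real.exp_pos (x₁ * t)).le)
    (Filter.Eventually.of_forall fun t => (Real.exp_pos (x₂ * (1 - t))).le) hf hg'
  -- identify the three integrals
  have hIoc : ∀ f : ℝ → ℝ, (∫ t, f t ∂μ) = ∫ t in (0:ℝ)..1, f t := fun f =>
    (intervalIntegral.integral_of_le zero_le_one).symm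
  have hA : (∫ t, Real.exp (x₁ * t) ^ (2:ℝ) ∂μ)
      = (if x₁ = 0 then 1 else (Real.exp (2 * x₁) - 1) / (2 * x₁)) := by
    rw [hIoc, ← aux_exp_integral]
    refine intervalIntegral.integral_congr fun t _ => ?_
    rw [← Real.exp_mul]; ring_nf
  have hB : (∫ t, Real.exp (x₂ * (1 - t)) ^ (2:ℝ) ∂μ)
      = (if x₂ = 0 then 1 else (Real.exp (2 * x₂) - 1) / (2 * x₂)) := by
    rw [hIoc, ← aux_exp_integral]
    have e : ∀ t : ℝ, Real.exp (x₂ * (1 - t)) ^ (2:ℝ) = Real.exp (2 * x₂ * (1 - t)) := by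
      intro t; rw [← Real.exp_mul]; ring_nf
    simp_rw [e]
    simpa using intervalIntegral.integral_comp_sub_left (a := (0:ℝ)) (b := 1) (fun s => Real.exp (2 * x₂ * s)) 1
  rw [hA, hB, hIoc] at hCS
  set A := (if x₁ = 0 then 1 else (Real.exp (2 * x₁) - 1) / (2 * x₁)) with hAdef
  set B := (if x₂ = 0 then 1 else (Real.exp (2 * x₂) - 1) / (2 * x₂)) with hBdef
  have hA0 : (0:ℝ) ≤ A := aux_nonneg x₁
  have hB0 : (0:ℝ) ≤ B := aux_nonneg x₂
  have hS0 : (0:ℝ) ≤ ∫ t in (0:ℝ)..1, Real.exp (x₁ * t) * Real.exp (x₂ * (1 - t)) :=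
    intervalIntegral.integral_nonneg zero_le_one fun t _ =>
      mul_nonneg (Real.exp_pos _).le (Real.exp_pos _).le
  calc ‖_‖ ^ 2
      ≤ (∫ t in (0:ℝ)..1, Real.exp (x₁ * t) * Real.exp (x₂ * (1 - t))) ^ 2 :=
        pow_le_pow_left₀ (norm_nonneg _) habs 2
    _ ≤ (A ^ ((1:ℝ)/2) * B ^ ((1:ℝ)/2)) ^ 2 :=
        pow_le_pow_left₀ hS0 hCS 2
    _ = A * B := by
        rw [mul_pow, ← Real.rpow_natCast (A ^ ((1:ℝ)/2)) 2, ← Real.rpow_natCast (B ^ ((1:ℝ)/2)) 2,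
          ← Real.rpow_mul hA0, ← Real.rpow_mul hB0]
        norm_num
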